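/- For any real a > 0 and integer p ≥ 1, |(p+2)(p+1)·Σ_{k=1}^∞ k^p (u − k/a)₊ − a^{p+1} u^{p+2}| ≤ (p+2)·a^p·u^{p+1} for every u ∈ [0,1]. -/

import Mathlib

noncomputable def Gf (a u : ℝ) (p : ℕ) (t : ℝ) : ℝ := t ^ p * u - t ^ (p+1) / a
noncomputable def Df (a u : ℝ) (p : ℕ) (t : ℝ) : ℝ := (p : ℝ) * t ^ (p-1) * u - ((p:ℝ)+1) * t ^ p / a
noncomputable def gf (a u : ℝ) (p : ℕ) (t : ℝ) : ℝ := t ^ p * max (u - t / a) 0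

lemma gf_eq (a u : ℝ) (p : ℕ) (ha : 0 < a) {s : ℝ} (hs : 0 ≤ s) :
    gf a u p s = Gf a u p (min s (a * u)) := by
  rcases le_or_gt s (a * u) with h | h
  · have h1 : 0 ≤ u - s / a := by
      rw [sub_nonneg, div_le_iff₀ ha]; linarith [h]
    simp [gf, Gf, min_eq_left h, max_eq_left h1, pow_succ, sub_mul]
    ring
  · have h1 : u - s / a < 0 := by
      rw [sub_neg, lt_div_iff₀ ha]; linarith [h]
    have : max (u - s / a) 0 = 0 := max_eq_right h1.le
    simp [gf, Gf, min_eq_right h.le, this, pow_succ]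
    field_simp; ring

lemma contD (a u : ℝ) (p : ℕ) : Continuous (Df a u p) := by
  unfold Df; continuity

lemma contg (a u : ℝ) (p : ℕ) : Continuous (gf a u p) := by
  unfold gf
  exact (continuous_pow p).mul ((continuous_const.sub (continuous_id.div_const a)).max continuous_const)

lemma integral_D (a u : ℝ) (p : ℕ) (hp : 1 ≤ p) (x y : ℝ) :
    ∫ t in x..y, Df a u p t = Gf a u p y - Gf a u p x := by
  refine intervalIntegral.integral_eq_sub_of_hasDerivAt (fun t _ => ?_) ((contD a u p).intervalIntegrable _ _)
  have h1 : HasDerivAt (fun t : ℝ => t ^ p) ((p:ℝ) * t ^ (p-1)) t := by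
    simpa using hasDerivAt_pow p t
  have h2 : HasDerivAt (fun t : ℝ => t ^ (p+1)) (((p:ℝ)+1) * t ^ p) t := by
    simpa using hasDerivAt_pow (p+1) t
  have h3 := (h1.mul_const u).sub (h2.div_const a)
  have : HasDerivAt (fun s : ℝ => s ^ p * u - s ^ (p+1) / a) (Df a u p t) t := by
    exact h3
  exact this

lemma gf_sub_le (a u : ℝ) (ha : 0 < a) (p : ℕ) (hp : 1 ≤ p)
    {x y : ℝ} (hx : 0 ≤ x) (hxy : x ≤ y) :
    |gf a u p y - gf a u p x| ≤ ∫ t in (min x (a*u))..(min y (a*u)), |Df a u p t| := by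
  rw [gf_eq a u p ha hx, gf_eq a u p ha (hx.trans hxy), ← integral_D a u p hp]
  exact intervalIntegral.abs_integral_le_integral_abs (min_le_min hxy le_rfl)

lemma step (a u : ℝ) (ha : 0 < a) (hu : 0 ≤ u) (p : ℕ) (hp : 1 ≤ p) (k : ℕ) :
    |gf a u p (k+1) - ∫ t in (k:ℝ)..(k+1), gf a u p t|
      ≤ ∫ t in (min (k:ℝ) (a*u))..(min ((k:ℝ)+1) (a*u)), |Df a u p t| := by
  set b := a*u with hb
  set C := ∫ t in (min (k:ℝ) b)..(min ((k:ℝ)+1) b), |Df a u p t| with hC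
  have habs : Continuous fun t => |Df a u p t| := (contD a u p).abs
  have hmono : ∀ t ∈ Set.Icc (k:ℝ) ((k:ℝ)+1), |gf a u p ((k:ℝ)+1) - gf a u p t| ≤ C := by
    intro t ht
    have h1 := gf_sub_le a u ha p hp (le_trans (Nat.cast_nonneg k) ht.1) ht.2
    refine h1.trans ?_
    refine intervalIntegral.integral_mono_interval (min_le_min ht.1 le_rfl) (min_le_min ht.2 le_rfl) le_rfl ?_ (habs.intervalIntegrable _ _)
    filter_upwards with t using abs_nonneg _
  have heq : gf a u p ((k:ℝ)+1) - ∫ t in (k:ℝ)..(k+1), gf a u p t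
      = ∫ t in (k:ℝ)..(k+1), (gf a u p ((k:ℝ)+1) - gf a u p t) := by
    rw [intervalIntegral.integral_sub (intervalIntegrable_const) (((contg a u p)).intervalIntegrable _ _)]
    simp
  rw [heq]
  have h2 : |∫ t in (k:ℝ)..(k+1), (gf a u p ((k:ℝ)+1) - gf a u p t)|
      ≤ ∫ t in (k:ℝ)..(k+1), |gf a u p ((k:ℝ)+1) - gf a u p t| :=
    intervalIntegral.abs_integral_le_integral_abs (by linarith)
  refine h2.trans ?_
  have h3 : (∫ t in (k:ℝ)..(k+1), |gf a u p ((k:ℝ)+1) - gf a u p t|)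
      ≤ ∫ _t in (k:ℝ)..(k+1), C := by
    refine intervalIntegral.integral_mono_on (by linarith) ?_ intervalIntegrable_const ?_
    · exact ((continuous_const.sub (contg a u p)).abs).intervalIntegrable _ _
    · exact hmono
  simpa using h3

lemma Gf_root (a u : ℝ) (ha : 0 < a) (p : ℕ) : Gf a u p (a*u) = 0 := by
  have : (a*u)^(p+1)/a = (a*u)^p * u := by
    rw [pow_succ]; field_simp
  simp [Gf, this]

lemma key (a u : ℝ) (ha : 0 < a) (hu : 0 < u) (p : ℕ) (hp : 1 ≤ p) :
    |(∑ k ∈ Finset.range ⌈a*u⌉₊, gf a u p (k+1)) - ∫ t in (0:ℝ)..(a*u), Gf a u p t|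
      ≤ ∫ t in (0:ℝ)..(a*u), |Df a u p t| := by
  set b := a*u with hbdef
  have hb : 0 < b := mul_pos ha hu
  set N := ⌈b⌉₊ with hN
  have hbN : b ≤ (N:ℝ) := Nat.le_ceil b
  have habs : Continuous fun t => |Df a u p t| := (contD a u p).abs
  -- ∫_0^N g = Σ ∫_k^{k+1} g
  have hsplit : ∑ k ∈ Finset.range N, (∫ t in ((k:ℕ):ℝ)..((k:ℕ)+1:ℕ), gf a u p t)
      = ∫ t in ((0:ℕ):ℝ)..(N:ℝ), gf a u p t := by
    exact intervalIntegral.sum_integral_adjacent_intervals (μ := MeasureTheory.volume)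
      (fun k _ => ((contg a u p)).intervalIntegrable _ _)
  -- ∫_0^N g = ∫_0^b G
  have hg0b : (∫ t in (0:ℝ)..b, gf a u p t) = ∫ t in (0:ℝ)..b, Gf a u p t := by
    refine intervalIntegral.integral_congr fun t ht => ?_
    rw [Set.uIcc_of_le hb.le] at ht
    rw [gf_eq a u p ha ht.1, min_eq_left ht.2]
  have hgbN : (∫ t in b..(N:ℝ), gf a u p t) = 0 := by
    rw [← intervalIntegral.integral_zero (a := b) (b := (N:ℝ))]
    refine intervalIntegral.integral_congr fun t ht => ?_
    rw [Set.uIcc_of_le hbN] at ht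
    rw [gf_eq a u p ha (hb.le.trans ht.1), min_eq_right ht.1, Gf_root a u ha p]
  have hint0N : (∫ t in (0:ℝ)..(N:ℝ), gf a u p t) = ∫ t in (0:ℝ)..b, Gf a u p t := by
    rw [← intervalIntegral.integral_add_adjacent_intervals
      (((contg a u p)).intervalIntegrable 0 b) (((contg a u p)).intervalIntegrable b N),
      hg0b, hgbN, add_zero]
  -- sum of C_k
  have hsumC : ∑ k ∈ Finset.range N, (∫ t in (min ((k:ℕ):ℝ) b)..(min (((k:ℕ):ℝ)+1) b), |Df a u p t|)
      = ∫ t in (min (0:ℝ) b)..(min (N:ℝ) b), |Df a u p t| := by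
    have := intervalIntegral.sum_integral_adjacent_intervals (μ := MeasureTheory.volume)
      (a := fun k : ℕ => min (k:ℝ) b) (n := N)
      (fun k _ => (habs).intervalIntegrable _ _)
    simpa using this
  calc |(∑ k ∈ Finset.range N, gf a u p (k+1)) - ∫ t in (0:ℝ)..b, Gf a u p t|
      = |∑ k ∈ Finset.range N, (gf a u p (k+1) - ∫ t in ((k:ℕ):ℝ)..((k:ℕ)+1:ℕ), gf a u p t)| := by
        rw [Finset.sum_sub_distrib, hsplit]
        norm_num [hint0N]
    _ ≤ ∑ k ∈ Finset.range N, |gf a u p (k+1) - ∫ t in ((k:ℕ):ℝ)..((k:ℕ)+1:ℕ), gf a u p t| :=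
        Finset.abs_sum_le_sum_abs _ _
    _ ≤ ∑ k ∈ Finset.range N, (∫ t in (min ((k:ℕ):ℝ) b)..(min (((k:ℕ):ℝ)+1) b), |Df a u p t|) := by
        refine Finset.sum_le_sum fun k _ => ?_
        have := step a u ha hu.le p hp k
        simpa [Nat.cast_add] using this
    _ = ∫ t in (0:ℝ)..b, |Df a u p t| := by
        rw [hsumC, min_eq_left hb.le, min_eq_right hbN]

lemma int_Gf (a u : ℝ) (ha : 0 < a) (p : ℕ) :
    (∫ t in (0:ℝ)..(a*u), Gf a u p t)
      = a^(p+1) * u^(p+2) / (((p:ℝ)+1) * ((p:ℝ)+2)) := by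
  have h1 : (∫ t in (0:ℝ)..(a*u), Gf a u p t)
      = (∫ t in (0:ℝ)..(a*u), t^p) * u - (∫ t in (0:ℝ)..(a*u), t^(p+1)) / a := by
    unfold Gf
    rw [← intervalIntegral.integral_div, ← intervalIntegral.integral_mul_const,
      ← intervalIntegral.integral_sub]
    · exact ((continuous_pow p).mul continuous_const).intervalIntegrable _ _
    · exact ((continuous_pow (p+1)).div_const a).intervalIntegrable _ _
  rw [h1, integral_pow, integral_pow]
  have hp1 : ((p:ℝ)+1) ≠ 0 := by positivity
  have hp2 : ((p:ℝ)+2) ≠ 0 := by positivity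
  have hb1 : (a*u)^(p+1) = a^(p+1)*u^(p+1) := mul_pow a u (p+1)
  have hb2 : (a*u)^(p+2) = a^(p+2)*u^(p+2) := mul_pow a u (p+2)
  push_cast
  rw [hb1, hb2]
  have ha2 : a^(p+2) = a^(p+1)*a := by rw [pow_succ]
  rw [ha2]
  field_simp
  ring

lemma int_absD (a u : ℝ) (ha : 0 < a) (hu : 0 < u) (p : ℕ) (hp : 1 ≤ p) :
    (∫ t in (0:ℝ)..(a*u), |Df a u p t|)
      = 2 * Gf a u p ((p:ℝ)*(a*u)/((p:ℝ)+1)) := by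
  set b := a*u with hbdef
  have hb : 0 < b := mul_pos ha hu
  set c := (p:ℝ)*b/((p:ℝ)+1) with hcdef
  have hp1 : (0:ℝ) < (p:ℝ)+1 := by positivity
  have hc0 : 0 ≤ c := by positivity
  have hcb : c ≤ b := by
    rw [hcdef, div_le_iff₀ hp1]; nlinarith
  have hDfact : ∀ t : ℝ, Df a u p t = t^(p-1) * ((p:ℝ)*u - ((p:ℝ)+1)*t/a) := by
    intro t
    have htp : t^p = t^(p-1)*t := by
      rw [← pow_succ]; congr 1; omega
    rw [Df, htp]; field_simp
  have hsign : ∀ t : ℝ, 0 ≤ t → ((p:ℝ)*u - ((p:ℝ)+1)*t/a) = ((p:ℝ)*b - ((p:ℝ)+1)*t)/a := by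
    intro t _; field_simp; ring
  have h1 : (∫ t in (0:ℝ)..c, |Df a u p t|) = Gf a u p c := by
    have : (∫ t in (0:ℝ)..c, |Df a u p t|) = ∫ t in (0:ℝ)..c, Df a u p t := by
      refine intervalIntegral.integral_congr fun t ht => ?_
      rw [Set.uIcc_of_le hc0] at ht
      rw [abs_of_nonneg]
      rw [hDfact]
      refine mul_nonneg (pow_nonneg ht.1 _) ?_
      rw [sub_nonneg, div_le_iff₀ ha]
      have : ((p:ℝ)+1)*t ≤ ((p:ℝ)+1)*c := by nlinarith [ht.2]
      have hcval : ((p:ℝ)+1)*c = (p:ℝ)*b := by rw [hcdef]; field_simp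
      nlinarith [this, hcval]
    rw [this, integral_D a u p hp]
    have : Gf a u p 0 = 0 := by
      simp [Gf, zero_pow (by omega : p ≠ 0)]
    rw [this, sub_zero]
  have h2 : (∫ t in c..b, |Df a u p t|) = Gf a u p c := by
    have : (∫ t in c..b, |Df a u p t|) = ∫ t in c..b, -Df a u p t := by
      refine intervalIntegral.integral_congr fun t ht => ?_
      rw [Set.uIcc_of_le hcb] at ht
      rw [abs_of_nonpos]
      rw [hDfact]
      refine mul_nonpos_of_nonneg_of_nonpos (pow_nonneg (hc0.trans ht.1) _) ?_
      rw [sub_nonpos, le_div_iff₀ ha]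
      have : ((p:ℝ)+1)*c ≤ ((p:ℝ)+1)*t := by nlinarith [ht.1]
      have hcval : ((p:ℝ)+1)*c = (p:ℝ)*b := by rw [hcdef]; field_simp
      nlinarith [this, hcval]
    rw [this, intervalIntegral.integral_neg, integral_D a u p hp, Gf_root a u ha p]
    ring
  have hadd := intervalIntegral.integral_add_adjacent_intervals (μ := MeasureTheory.volume)
    (((contD a u p).abs).intervalIntegrable (0:ℝ) c)
    (((contD a u p).abs).intervalIntegrable c b)
  rw [← hadd, h1, h2]; ring

lemma Gstar_le (a u : ℝ) (ha : 0 < a) (hu : 0 < u) (p : ℕ) (hp : 1 ≤ p) :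
    2 * Gf a u p ((p:ℝ)*(a*u)/((p:ℝ)+1)) ≤ a^p * u^(p+1) / ((p:ℝ)+1) := by
  set c := (p:ℝ)*(a*u)/((p:ℝ)+1) with hcdef
  have hp1 : (0:ℝ) < (p:ℝ)+1 := by positivity
  have hpp : (0:ℝ) < (p:ℝ) := by exact_mod_cast Nat.pos_of_ne_zero (by omega)
  have hcval : Gf a u p c = c^p * u / ((p:ℝ)+1) := by
    have h1 : u - c/a = u/((p:ℝ)+1) := by
      rw [hcdef]; field_simp; ring
    have : Gf a u p c = c^p * (u - c/a) := by
      rw [Gf, pow_succ]; field_simp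
    rw [this, h1, mul_div_assoc]
  rw [hcval]
  have hcle : c^p ≤ ((p:ℝ)/((p:ℝ)+1))^p * (a^p * u^p) := by
    rw [hcdef]
    rw [div_pow, div_pow]
    rw [mul_pow, mul_pow]
    ring_nf
    exact le_refl _
  have hbern : 2 * ((p:ℝ)/((p:ℝ)+1))^p ≤ 1 := by
    have hpos : (0:ℝ) ≤ 1/(p:ℝ) := by positivity
    have h := one_add_mul_le_pow (a := 1/(p:ℝ)) (by linarith : (-2:ℝ) ≤ 1/(p:ℝ)) p
    have h2 : (1:ℝ) + (p:ℝ)*(1/(p:ℝ)) = 2 := by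
      rw [mul_one_div, div_self hpp.ne']; norm_num
    rw [h2] at h
    have h3 : ((1:ℝ) + 1/(p:ℝ)) = ((p:ℝ)+1)/(p:ℝ) := by field_simp
    rw [h3, div_pow] at h
    have hppow : (0:ℝ) < (p:ℝ)^p := by positivity
    rw [div_pow]
    rw [le_div_iff₀ hppow] at h
    have hq : (0:ℝ) < ((p:ℝ)+1)^p := by positivity
    rw [← mul_div_assoc, div_le_one hq]
    exact h
  have hau : (0:ℝ) ≤ a^p * u^p := by positivity
  have hb2 : (0:ℝ) ≤ ((p:ℝ)/((p:ℝ)+1))^p := by positivity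
  have key2 : 2 * c^p ≤ a^p * u^p := by nlinarith [hcle, hbern, hau]
  calc 2 * (c^p * u / ((p:ℝ)+1)) = (2*c^p) * u / ((p:ℝ)+1) := by ring
    _ ≤ (a^p * u^p) * u / ((p:ℝ)+1) := by gcongr
    _ = a^p * u^(p+1) / ((p:ℝ)+1) := by rw [pow_succ]; ring



/-- For any real `a > 0`, integer `p ≥ 1` and `u ∈ [0,1]`,
`|(p+2)(p+1) Σ_{k=1}^∞ k^p (u − k/a)₊ − a^{p+1} u^{p+2}| ≤ (p+2) a^p u^{p+1}`. -/
theorem sum_power_pos_part_bound (a : ℝ) (ha : 0 < a) (p : ℕ) (hp : 1 ≤ p)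
    (u : ℝ) (hu : u ∈ Set.Icc (0:ℝ) 1) :
    |((p:ℝ) + 2) * ((p:ℝ) + 1) * (∑' k : ℕ, ((k:ℝ) + 1) ^ p * max (u - ((k:ℝ) + 1) / a) 0)
        - a ^ (p + 1) * u ^ (p + 2)|
      ≤ ((p:ℝ) + 2) * a ^ p * u ^ (p + 1) := by
  obtain ⟨hu0, hu1⟩ := hu
  rcases hu0.eq_or_lt with h0 | h0
  · have hz : ∀ k : ℕ, ((k:ℝ) + 1) ^ p * max (u - ((k:ℝ) + 1) / a) 0 = 0 := by
      intro k
      have : u - ((k:ℝ)+1)/a ≤ 0 := by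
        have : (0:ℝ) ≤ ((k:ℝ)+1)/a := by positivity
        rw [← h0]; linarith
      rw [max_eq_right this, mul_zero]
    rw [tsum_congr hz, tsum_zero, ← h0]
    simp [zero_pow (by omega : p + 2 ≠ 0), zero_pow (by omega : p + 1 ≠ 0)]
  · set N := ⌈a*u⌉₊ with hN
    have hb : 0 < a*u := mul_pos ha h0
    have htsum : (∑' k : ℕ, ((k:ℝ) + 1) ^ p * max (u - ((k:ℝ) + 1) / a) 0)
        = ∑ k ∈ Finset.range N, gf a u p ((k:ℝ)+1) := by
      refine tsum_eq_sum fun k hk => ?_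
      have hk' : (N:ℝ) ≤ (k:ℝ) := by
        exact_mod_cast Nat.le_of_not_lt (fun h => hk (Finset.mem_range.mpr h))
      have hgt : a*u < (k:ℝ)+1 := by
        have := Nat.le_ceil (a*u)
        rw [← hN] at this; linarith
      have : u - ((k:ℝ)+1)/a < 0 := by
        rw [sub_neg, lt_div_iff₀ ha]; linarith
      rw [max_eq_right this.le, mul_zero]
    rw [htsum]
    set S := ∑ k ∈ Finset.range N, gf a u p ((k:ℝ)+1) with hS
    have hSeq : S = ∑ k ∈ Finset.range N, gf a u p (↑k+1) := rfl
    set F := a^(p+1) * u^(p+2) / (((p:ℝ)+1) * ((p:ℝ)+2)) with hF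
    have hkey := key a u ha h0 p hp
    rw [int_Gf a u ha p] at hkey
    have habsD := int_absD a u ha h0 p hp
    have hstar := Gstar_le a u ha h0 p hp
    have hmain : |S - F| ≤ a^p * u^(p+1) / ((p:ℝ)+1) := by
      calc |S - F| ≤ ∫ t in (0:ℝ)..(a*u), |Df a u p t| := hkey
        _ = 2 * Gf a u p ((p:ℝ)*(a*u)/((p:ℝ)+1)) := habsD
        _ ≤ a^p * u^(p+1) / ((p:ℝ)+1) := hstar
    have hp1 : (0:ℝ) < (p:ℝ)+1 := by positivity
    have hp2 : (0:ℝ) < (p:ℝ)+2 := by positivity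
    have hrw : ((p:ℝ)+2) * ((p:ℝ)+1) * S - a^(p+1)*u^(p+2)
        = (((p:ℝ)+2) * ((p:ℝ)+1)) * (S - F) := by
      rw [hF]; field_simp
    rw [hrw, abs_mul, abs_of_nonneg (by positivity : (0:ℝ) ≤ ((p:ℝ)+2)*((p:ℝ)+1))]
    calc (((p:ℝ)+2)*((p:ℝ)+1)) * |S - F|
        ≤ (((p:ℝ)+2)*((p:ℝ)+1)) * (a^p * u^(p+1) / ((p:ℝ)+1)) := by
          exact mul_le_mul_of_nonneg_left hmain (by positivity)
      _ = ((p:ℝ)+2) * a^p * u^(p+1) := by field_simp
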